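/- Let r be a positive integer, let G be a finite nonempty simple graph and let H be a nonempty induced subgraph of G. Then the r-splitter rank of H is at most the r-splitter rank of G. -/

import Mathlib

open Classical

/-- The closed `r`-neighborhood of `c` inside the induced subgraph `G[A]`:
all vertices of `A` joined to `c` by a walk of length at most `r` staying in `A`. -/
noncomputable def ball {V : Type*} (G : SimpleGraph V) (r : ℕ) (A : Finset V) (c : V) :
    Finset V :=
  A.filter (fun v => ∃ p : G.Walk c v, p.length ≤ r ∧ ∀ x ∈ p.support, x ∈ A)

/-- The `r`-splitter rank of the induced subgraph `G[A]` (with `rank ∅ = 0`). -/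
noncomputable def splitterRank {V : Type*} [DecidableEq V] (G : SimpleGraph V) (r : ℕ)
    (A : Finset V) : ℕ :=
  if _ : A.Nonempty then
    1 + A.attach.sup (fun c =>
      (ball G r A c.1).attach.inf'
        (Finset.attach_nonempty_iff.2 ⟨c.1, Finset.mem_filter.2 ⟨c.2,
          SimpleGraph.Walk.nil, by simp, by simp [c.2]⟩⟩)
        (fun s => splitterRank G r ((ball G r A c.1).erase s.1)))
  else 0
termination_by A.card
decreasing_by
  exact lt_of_lt_of_le (Finset.card_erase_lt_of_mem s.2)
    (Finset.card_le_card (Finset.filter_subset _ _))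

lemma ball_mono {V : Type*} (G : SimpleGraph V) (r : ℕ) {A B : Finset V} (h : A ⊆ B) (c : V) :
    ball G r A c ⊆ ball G r B c := by
  intro v hv
  simp only [ball, Finset.mem_filter] at *
  obtain ⟨hvA, p, hp, hsup⟩ := hv
  exact ⟨h hvA, p, hp, fun x hx => h (hsup x hx)⟩

lemma mem_ball_self {V : Type*} (G : SimpleGraph V) (r : ℕ) {A : Finset V} {c : V} (hc : c ∈ A) :
    c ∈ ball G r A c :=
  Finset.mem_filter.2 ⟨hc, SimpleGraph.Walk.nil, by simp, by simp [hc]⟩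

lemma splitterRank_mono {V : Type*} [DecidableEq V] (G : SimpleGraph V) (r : ℕ) :
    ∀ n (A B : Finset V), A ⊆ B → B.card ≤ n →
      splitterRank G r A ≤ splitterRank G r B := by
  intro n
  induction n with
  | zero =>
    intro A B hAB hB
    have : ¬ A.Nonempty := by
      rw [Finset.card_eq_zero.1 (Nat.le_zero.1 hB), Finset.subset_empty] at hAB
      simp [hAB]
    rw [splitterRank, dif_neg this]
    exact Nat.zero_le _
  | succ n ih =>
    intro A B hAB hB
    by_cases hA : A.Nonempty
    · have hBn : B.Nonempty := hA.mono hAB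
      rw [splitterRank, splitterRank, dif_pos hA, dif_pos hBn]
      apply Nat.add_le_add_left
      apply Finset.sup_le
      intro c _
      refine le_trans ?_ (Finset.le_sup (Finset.mem_attach _ (⟨c.1, hAB c.2⟩ : {x // x ∈ B})))
      have hcB : c.1 ∈ B := hAB c.2
      obtain ⟨s', _, hEq⟩ := Finset.exists_mem_eq_inf'
        (Finset.attach_nonempty_iff.2 ⟨c.1, mem_ball_self G r hcB⟩)
        (fun s : {x // x ∈ ball G r B c.1} => splitterRank G r ((ball G r B c.1).erase s.1))
      rw [hEq]
      have hcardB : ((ball G r B c.1).erase s'.1).card ≤ n := by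
        have h1 : ((ball G r B c.1).erase s'.1).card < (ball G r B c.1).card :=
          Finset.card_erase_lt_of_mem s'.2
        have h2 : (ball G r B c.1).card ≤ B.card :=
          Finset.card_le_card (Finset.filter_subset _ _)
        omega
      by_cases hs'A : s'.1 ∈ ball G r A c.1
      · refine le_trans (Finset.inf'_le _ (Finset.mem_attach _ ⟨s'.1, hs'A⟩)) ?_
        exact ih _ _ (Finset.erase_subset_erase _ (ball_mono G r hAB c.1)) hcardB
      · refine le_trans (Finset.inf'_le _
          (Finset.mem_attach _ ⟨c.1, mem_ball_self G r c.2⟩)) ?_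
        refine ih _ _ ?_ hcardB
        intro x hx
        have hxA : x ∈ ball G r A c.1 := Finset.mem_of_mem_erase hx
        refine Finset.mem_erase.2 ⟨?_, ball_mono G r hAB c.1 hxA⟩
        rintro rfl; exact hs'A hxA
    · rw [splitterRank, dif_neg hA]
      exact Nat.zero_le _

/-- The `r`-splitter rank of a nonempty induced subgraph is at most that of the whole graph. -/
theorem rank_mono_induced {V : Type*} [Fintype V] [DecidableEq V] [Nonempty V]
    (G : SimpleGraph V) (r : ℕ) (hr : 0 < r) (H : Finset V) (hH : H.Nonempty) :
    splitterRank G r H ≤ splitterRank G r Finset.univ :=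
  splitterRank_mono G r _ H Finset.univ (Finset.subset_univ H) le_rfl
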